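/- Let H be a hypergraph with a red-blue partition (Red, X, Blue) of V(H) such that no hyperedge contains both a red and a blue vertex, and let F be a reduced elimination forest of H. Let P be a directed root-to-descendant path in F whose final vertex is not a leaf, and W a nonempty set of children of the final vertex of P. If the context factor Cont_F(P,W) is contained in Red ∪ Blue and the vertex set of P is monochromatic, then Cont_F(P,W) is monochromatic. -/

import Mathlib

/-- A hypergraph on vertex type `V`: a set of nonempty hyperedges. -/
structure SetHypergraph (V : Type*) where
  E : Set (Set V)
  edge_nonempty : ∀ e ∈ E, e.Nonempty

/-- Two vertices are adjacent if they are distinct and share a hyperedge. -/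
def SetHypergraph.adj {V : Type*} (H : SetHypergraph V) (u v : V) : Prop :=
  u ≠ v ∧ ∃ e ∈ H.E, u ∈ e ∧ v ∈ e

/-- A rooted forest on `V`, given by parent pointers, with no infinite ancestor chains. -/
structure RootedForest (V : Type*) where
  parent : V → Option V
  wf : WellFounded fun a b => parent b = some a

/-- `F.anc a b` : `a` is an ancestor of `b` (every vertex is an ancestor of itself). -/
def RootedForest.anc {V : Type*} (F : RootedForest V) (a b : V) : Prop :=
  Relation.ReflTransGen (fun x y => F.parent x = some y) b a

/-- The set of descendants of `x` (including `x` itself). -/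
def RootedForest.desc {V : Type*} (F : RootedForest V) (x : V) : Set V :=
  {v | F.anc x v}

/-- `F` is an elimination forest of `H`: any two adjacent vertices are in
ancestor–descendant relation. -/
def IsEliminationForest {V : Type*} (H : SetHypergraph V) (F : RootedForest V) : Prop :=
  ∀ u v, H.adj u v → F.anc u v ∨ F.anc v u

/-- `F` is reduced: every non-leaf vertex `u` is adjacent in `H` to the subtree
rooted at each of its children. -/
def IsReducedForest {V : Type*} (H : SetHypergraph V) (F : RootedForest V) : Prop :=
  ∀ u v, F.parent v = some u → ∃ w ∈ F.desc v, H.adj u w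

/-- The subhypergraph of `H` induced by `S` is connected. -/
def HConnectedOn {V : Type*} (H : SetHypergraph V) (S : Set V) : Prop :=
  ∀ a ∈ S, ∀ b ∈ S,
    Relation.ReflTransGen (fun x y => x ∈ S ∧ y ∈ S ∧ H.adj x y) a b

section helpers

variable {V : Type*}

/-- one step up the forest -/
private abbrev fstep (F : RootedForest V) (p q : V) : Prop := F.parent p = some q

private lemma wf_irrefl {α : Sort*} {r : α → α → Prop} (h : WellFounded r) (a : α) : ¬ r a a :=
  h.induction (C := fun a => ¬ r a a) a fun x ih hx => ih x hx hx

private lemma no_cycle (F : RootedForest V) (a : V) : ¬ Relation.TransGen (fstep F) a a := by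
  intro h
  have h' : Relation.TransGen (Function.swap (fstep F)) a a := Relation.transGen_swap.mpr h
  exact wf_irrefl F.wf.transGen a h'

private lemma antisymmF (F : RootedForest V) {a b : V}
    (h1 : Relation.ReflTransGen (fstep F) a b) (h2 : Relation.ReflTransGen (fstep F) b a) :
    a = b := by
  rcases h1.cases_head with h | ⟨c, hc, hcb⟩
  · exact h
  · exact absurd ((Relation.TransGen.head' hc hcb).trans_left h2) (no_cycle F a)

private lemma linearF (F : RootedForest V) {a b z : V}
    (ha : Relation.ReflTransGen (fstep F) z a) (hb : Relation.ReflTransGen (fstep F) z b) :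
    Relation.ReflTransGen (fstep F) a b ∨ Relation.ReflTransGen (fstep F) b a := by
  induction ha using Relation.ReflTransGen.head_induction_on with
  | refl => exact Or.inl hb
  | head h1 h2 ih =>
    rcases hb.cases_head with h | ⟨c', hc', hc'b⟩
    · exact Or.inr (h ▸ Relation.ReflTransGen.head h1 h2)
    · have : c' = _ := Option.some.inj (hc'.symm.trans h1)
      exact ih (this ▸ hc'b)

private lemma exists_child (F : RootedForest V) {a b : V}
    (h : Relation.ReflTransGen (fstep F) b a) (hne : b ≠ a) :
    ∃ c, F.parent c = some a ∧ Relation.ReflTransGen (fstep F) b c := by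
  induction h using Relation.ReflTransGen.head_induction_on with
  | refl => exact absurd rfl hne
  | @head p q h1 h2 ih =>
    by_cases hqa : q = a
    · exact ⟨p, hqa ▸ h1, Relation.ReflTransGen.refl⟩
    · obtain ⟨c, hc1, hc2⟩ := ih hqa
      exact ⟨c, hc1, Relation.ReflTransGen.head h1 hc2⟩

private lemma adj_symm (H : SetHypergraph V) {u v : V} (h : H.adj u v) : H.adj v u :=
  ⟨h.1.symm, h.2.imp fun e ⟨he, hu, hv⟩ => ⟨he, hv, hu⟩⟩

private lemma desc_mono (F : RootedForest V) {a c : V} (h : F.parent c = some a) :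
    F.desc c ⊆ F.desc a := fun _z hz => hz.tail h

private lemma conn [Fintype V] (H : SetHypergraph V) (F : RootedForest V) (hred : IsReducedForest H F) :
    ∀ n (a b : V), (F.desc a).ncard ≤ n → F.anc a b →
      Relation.ReflTransGen (fun p q => p ∈ F.desc a ∧ q ∈ F.desc a ∧ H.adj p q) a b := by
  intro n
  induction n with
  | zero =>
    intro a b hcard _
    have ha : a ∈ F.desc a := Relation.ReflTransGen.refl
    have := (Set.ncard_pos (Set.toFinite _)).mpr ⟨a, ha⟩
    omega
  | succ n ih =>
    intro a b hcard hab
    by_cases hba : b = a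
    · exact hba ▸ Relation.ReflTransGen.refl
    · obtain ⟨c, hc, hcb⟩ := exists_child F hab hba
      have hsub : F.desc c ⊆ F.desc a := desc_mono F hc
      have hastrict : a ∉ F.desc c := by
        intro hac
        exact no_cycle F a (Relation.TransGen.tail' hac hc)
      have hss : F.desc c ⊂ F.desc a :=
        ⟨hsub, fun h => hastrict (h Relation.ReflTransGen.refl)⟩
      have hlt : (F.desc c).ncard < (F.desc a).ncard :=
        Set.ncard_lt_ncard hss (Set.toFinite _)
      have hcardc : (F.desc c).ncard ≤ n := by omega
      obtain ⟨w0, hw0, hadj⟩ := hred a c hc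
      have p1 := ih c w0 hcardc hw0
      have p2 := ih c b hcardc hcb
      have hsymm : Symmetric (fun p q => p ∈ F.desc c ∧ q ∈ F.desc c ∧ H.adj p q) :=
        fun _p _q ⟨h1, h2, h3⟩ => ⟨h2, h1, adj_symm H h3⟩
      have p1' := (@Relation.ReflTransGen.stdSymm _ _ ⟨fun _ _ h => hsymm h⟩).symm _ _ p1
      have pw : Relation.ReflTransGen (fun p q => p ∈ F.desc c ∧ q ∈ F.desc c ∧ H.adj p q) w0 b :=
        p1'.trans p2
      have pw' : Relation.ReflTransGen (fun p q => p ∈ F.desc a ∧ q ∈ F.desc a ∧ H.adj p q) w0 b :=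
        Relation.ReflTransGen.mono (r := fun p q => p ∈ F.desc c ∧ q ∈ F.desc c ∧ H.adj p q) (p := fun p q => p ∈ F.desc a ∧ q ∈ F.desc a ∧ H.adj p q) (fun _p _q ⟨h1, h2, h3⟩ => ⟨hsub h1, hsub h2, h3⟩) _ _ pw
      exact Relation.ReflTransGen.head ⟨Relation.ReflTransGen.refl, hsub hw0, hadj⟩ pw'

private lemma color_prop (H : SetHypergraph V) (A B S : Set V)
    (hsep : ∀ e ∈ H.E, ¬((e ∩ A).Nonempty ∧ (e ∩ B).Nonempty)) (hS : S ⊆ A ∪ B)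
    {p q : V} (h : Relation.ReflTransGen (fun x y => x ∈ S ∧ y ∈ S ∧ H.adj x y) p q)
    (hp : p ∈ A) : q ∈ A := by
  induction h with
  | refl => exact hp
  | tail _h1 h2 ihr =>
    obtain ⟨hrS, hqS, hne, e, he, hre, hqe⟩ := h2
    rcases hS hqS with hq | hq
    · exact hq
    · exact absurd ⟨⟨_, hre, ihr⟩, ⟨_, hqe, hq⟩⟩ (hsep e he)

private lemma spine_decomp (F : RootedForest V) {x y v : V} (hxy : F.anc x y)
    (h : F.anc x v) :
    v ∈ {v | F.anc x v ∧ F.anc v y} ∨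
      ∃ u c, u ∈ {v | F.anc x v ∧ F.anc v y} ∧ F.parent c = some u ∧
        c ∉ {v | F.anc x v ∧ F.anc v y} ∧ F.anc c v := by
  induction h using Relation.ReflTransGen.head_induction_on with
  | refl => exact Or.inl ⟨Relation.ReflTransGen.refl, hxy⟩
  | @head v p h1 h2 ih =>
    by_cases hv : v ∈ {v | F.anc x v ∧ F.anc v y}
    · exact Or.inl hv
    · rcases ih with hp | ⟨u, c, hu, hcu, hcs, hcp⟩
      · exact Or.inr ⟨p, v, hp, h1, hv, Relation.ReflTransGen.refl⟩
      · exact Or.inr ⟨u, c, hu, hcu, hcs, Relation.ReflTransGen.head h1 hcp⟩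

private lemma core [Fintype V] (H : SetHypergraph V) (F : RootedForest V) (hred : IsReducedForest H F)
    (A B : Set V)
    (hsep : ∀ e ∈ H.E, ¬((e ∩ A).Nonempty ∧ (e ∩ B).Nonempty))
    (x y : V) (hxy : F.anc x y)
    (W : Set V) (hW : ∀ w ∈ W, F.parent w = some y)
    (hU : (F.desc x \ ⋃ w ∈ W, F.desc w) ⊆ A ∪ B)
    (hP : {v | F.anc x v ∧ F.anc v y} ⊆ A) :
    (F.desc x \ ⋃ w ∈ W, F.desc w) ⊆ A := by
  intro v hv
  obtain ⟨hvx, hvW⟩ := hv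
  rcases spine_decomp F hxy hvx with hvs | ⟨u, c, hu, hcu, hcs, hcv⟩
  · exact hP hvs
  · -- c is not in W
    have hcW : c ∉ W := by
      intro hcWmem
      exact hvW (Set.mem_biUnion hcWmem hcv)
    -- desc c ⊆ context factor
    have hdesc_sub : F.desc c ⊆ (F.desc x \ ⋃ w ∈ W, F.desc w) := by
      intro z hz
      refine ⟨(desc_mono F hcu hz).trans hu.1, ?_⟩
      intro hzW
      obtain ⟨t, ht, hzt⟩ := Set.mem_iUnion₂.mp hzW
      -- z ∈ desc t, t ∈ W ; also z ∈ desc c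
      rcases linearF F hzt hz with htc | hct
      · -- htc : RTG t c, i.e. c is an ancestor of t
        by_cases htceq : t = c
        · exact hcW (htceq ▸ ht)
        · rcases htc.cases_head with hh | ⟨m, hm, hmc⟩
          · exact absurd hh htceq
          · have hmy : m = y := Option.some.inj (hm.symm.trans (hW t ht))
            -- so anc c y, hence c on spine, contradiction
            have hcy : F.anc c y := hmy ▸ hmc
            have hxc : F.anc x c := Relation.ReflTransGen.head hcu hu.1
            exact absurd ⟨hxc, hcy⟩ hcs
      · -- hct : RTG c t, i.e. t is an ancestor of c
        by_cases htceq : t = c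
        · exact hcW (htceq ▸ ht)
        · have hty : fstep F t y := hW t ht
          have hcy : Relation.TransGen (fstep F) c y := Relation.TransGen.tail' hct hty
          obtain ⟨m, hm, hmy⟩ := Relation.TransGen.head'_iff.mp hcy
          have hmu : m = u := Option.some.inj (hm.symm.trans hcu)
          have huy : u = y := antisymmF F (hmu ▸ hmy) hu.2
          rcases hct.cases_head with hh | ⟨m', hm', hm't⟩
          · exact absurd hh.symm htceq
          · have hm'u : m' = u := Option.some.inj (hm'.symm.trans hcu)
            have hyt : Relation.ReflTransGen (fstep F) y t := huy ▸ hm'u ▸ hm't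
            exact no_cycle F y (Relation.TransGen.tail' hyt hty)
    -- u has color A
    have huA : u ∈ A := hP hu
    -- reduced: u adjacent to some w0 in desc c
    obtain ⟨w0, hw0, hadj⟩ := hred u c hcu
    have hw0AB : w0 ∈ A ∪ B := hU (hdesc_sub hw0)
    have hw0A : w0 ∈ A := by
      rcases hw0AB with h | h
      · exact h
      · obtain ⟨_, e, he, hue, hwe⟩ := hadj
        exact absurd ⟨⟨u, hue, huA⟩, ⟨w0, hwe, h⟩⟩ (hsep e he)
    -- connectivity within desc c
    have p1 := conn H F hred (F.desc c).ncard c w0 le_rfl hw0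
    have p2 := conn H F hred (F.desc c).ncard c v le_rfl hcv
    have hsymm : Symmetric (fun p q => p ∈ F.desc c ∧ q ∈ F.desc c ∧ H.adj p q) :=
      fun _p _q ⟨h1, h2, h3⟩ => ⟨h2, h1, adj_symm H h3⟩
    have pw := ((@Relation.ReflTransGen.stdSymm _ _ ⟨fun _ _ h => hsymm h⟩).symm _ _ p1).trans p2
    exact color_prop H A B (F.desc c)
      hsep (fun z hz => hU (hdesc_sub hz)) pw hw0A

end helpers

/-- Monochromatic spine forces a monochromatic context factor.
Here the context factor `Cont_F(P, W)` with spine `P` (the path from `x` down to `y`)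
and appendices `W` (a nonempty set of children of `y`) is the set
`F.desc x \ ⋃ w ∈ W, F.desc w`, and `V(P) = {v | F.anc x v ∧ F.anc v y}`. -/
theorem stmt_4 {V : Type*} [Fintype V] (H : SetHypergraph V) (F : RootedForest V)
    (hEF : IsEliminationForest H F) (hred : IsReducedForest H F)
    (Red X Blue : Set V) (hcover : Red ∪ X ∪ Blue = Set.univ)
    (hRX : Disjoint Red X) (hRB : Disjoint Red Blue) (hXB : Disjoint X Blue)
    (hsep : ∀ e ∈ H.E, ¬((e ∩ Red).Nonempty ∧ (e ∩ Blue).Nonempty))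
    (x y : V) (hxy : F.anc x y)
    (W : Set V) (hWne : W.Nonempty) (hW : ∀ w ∈ W, F.parent w = some y)
    (hU : (F.desc x \ ⋃ w ∈ W, F.desc w) ⊆ Red ∪ Blue)
    (hP : {v | F.anc x v ∧ F.anc v y} ⊆ Red ∨ {v | F.anc x v ∧ F.anc v y} ⊆ Blue) :
    (F.desc x \ ⋃ w ∈ W, F.desc w) ⊆ Red ∨ (F.desc x \ ⋃ w ∈ W, F.desc w) ⊆ Blue := by
  rcases hP with h | h
  · exact Or.inl (core H F hred Red Blue hsep x y hxy W hW hU h)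
  · refine Or.inr (core H F hred Blue Red ?_ x y hxy W hW ?_ h)
    · intro e he hcontra
      exact hsep e he ⟨hcontra.2, hcontra.1⟩
    · rw [Set.union_comm]
      exact hU
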